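/- Let d ≥ 2 and let u(t), v(t) ∈ ℂ[t] be polynomials of the same degree D ≥ 1 such that u^d - v^d has degree strictly less than D(d-1). Then there exists a d-th root of unity ζ with u = ζ·v. -/

import Mathlib

open Polynomial

theorem stmt18 (d D : ℕ) (hd : 2 ≤ d) (hD : 1 ≤ D)
    (u v : Polynomial ℂ) (hu : u.natDegree = D) (hv : v.natDegree = D)
    (hdeg : (u ^ d - v ^ d).degree < ((D * (d - 1) : ℕ) : WithBot ℕ)) :
    ∃ ζ : ℂ, ζ ^ d = 1 ∧ u = C ζ * v := by
  have hd0 : 0 < d := by omega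
  -- primitive root in ℂ and in ℂ[t]
  obtain ⟨ζ₀, hζ₀⟩ : ∃ ζ : ℂ, IsPrimitiveRoot ζ d :=
    ⟨_, Complex.isPrimitiveRoot_exp d hd0.ne'⟩
  have hζ₀' : IsPrimitiveRoot (C ζ₀ : Polynomial ℂ) d :=
    hζ₀.map_of_injective (C_injective)
  have hid : u ^ d - v ^ d =
      ∏ μ ∈ nthRootsFinset d (1 : Polynomial ℂ), (u - μ * v) :=
    IsPrimitiveRoot.pow_sub_pow_eq_prod_sub_mul (x := u) (y := v) hd0 hζ₀'
  have hcard : (nthRootsFinset d (1 : Polynomial ℂ)).card = d := hζ₀'.card_nthRootsFinset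
  by_contra hcon
  push_neg at hcon
  have hv0 : v ≠ 0 := by
    intro h
    rw [h, natDegree_zero] at hv; omega
  have hlcv : v.leadingCoeff ≠ 0 := leadingCoeff_ne_zero.mpr hv0
  -- every μ in the root set is a constant C c with c^d = 1
  have hconst : ∀ μ ∈ nthRootsFinset d (1 : Polynomial ℂ),
      ∃ c : ℂ, μ = C c ∧ c ^ d = 1 := by
    intro μ hμ
    have hμd : μ ^ d = 1 := (mem_nthRootsFinset hd0 (1 : Polynomial ℂ)).mp hμ
    have hnd : μ.natDegree = 0 := by
      have h1 : d * μ.natDegree = 0 := by rw [← natDegree_pow, hμd, natDegree_one]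
      rcases Nat.mul_eq_zero.mp h1 with h | h
      · omega
      · exact h
    have hμc : μ = C (μ.coeff 0) := eq_C_of_natDegree_eq_zero hnd
    refine ⟨μ.coeff 0, hμc, ?_⟩
    have h2 : C (μ.coeff 0 ^ d) = C (1 : ℂ) := by rw [C_pow, ← hμc, hμd, C_1]
    exact C_inj.mp h2
  -- each factor is nonzero
  have hne : ∀ μ ∈ nthRootsFinset d (1 : Polynomial ℂ), u - μ * v ≠ 0 := by
    intro μ hμ h
    obtain ⟨c, rfl, hc⟩ := hconst μ hμ
    exact hcon c hc (by linear_combination (norm := ring_nf) h)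
  -- degrees
  have hdegprod : (u ^ d - v ^ d).degree =
      ∑ μ ∈ nthRootsFinset d (1 : Polynomial ℂ), (u - μ * v).degree := by
    rw [hid, degree_prod]
  -- the possibly-degenerate factor
  set b : Polynomial ℂ := C (u.leadingCoeff / v.leadingCoeff) with hb
  have hDeq : ∀ μ ∈ (nthRootsFinset d (1 : Polynomial ℂ)).erase b,
      (u - μ * v).natDegree = D := by
    intro μ hμ
    obtain ⟨hμb, hμS⟩ := Finset.mem_erase.mp hμ
    obtain ⟨c, rfl, hc⟩ := hconst μ hμS
    have hcoeff : (u - C c * v).coeff D ≠ 0 := by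
      have h1 : u.coeff D = u.leadingCoeff := by rw [← hu]; rfl
      have h2 : v.coeff D = v.leadingCoeff := by rw [← hv]; rfl
      simp only [coeff_sub, coeff_C_mul, h1, h2]
      intro h
      apply hμb
      rw [hb]
      congr 1
      field_simp
      linear_combination -h
    have hle : (u - C c * v).natDegree ≤ D :=
      le_trans (natDegree_sub_le _ _) (by
        simp only [max_le_iff]
        constructor
        · omega
        · exact le_trans (natDegree_mul_le) (by simp [hv]))
    exact le_antisymm hle (le_natDegree_of_ne_zero hcoeff)
  -- sum of natDegrees
  have hsum : (u ^ d - v ^ d).degree =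
      ((∑ μ ∈ nthRootsFinset d (1 : Polynomial ℂ), (u - μ * v).natDegree : ℕ) : WithBot ℕ) := by
    rw [hdegprod, Nat.cast_sum]
    exact Finset.sum_congr rfl fun μ hμ => degree_eq_natDegree (hne μ hμ)
  have hbound : D * (d - 1) ≤
      ∑ μ ∈ nthRootsFinset d (1 : Polynomial ℂ), (u - μ * v).natDegree := by
    calc D * (d - 1) = (d - 1) * D := by ring
    _ ≤ ((nthRootsFinset d (1 : Polynomial ℂ)).erase b).card * D := by
        apply Nat.mul_le_mul_right
        have := Finset.pred_card_le_card_erase (s := nthRootsFinset d (1 : Polynomial ℂ)) (a := b)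
        omega
    _ = ∑ μ ∈ (nthRootsFinset d (1 : Polynomial ℂ)).erase b, (u - μ * v).natDegree := by
        rw [Finset.sum_congr rfl hDeq, Finset.sum_const, smul_eq_mul]
    _ ≤ _ := Finset.sum_le_sum_of_subset (Finset.erase_subset _ _)
  rw [hsum] at hdeg
  exact absurd hdeg (not_lt.mpr (by exact_mod_cast hbound))
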